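/- For all m ≥ 2 and n ≥ 1, the expected number of Column's strictly undominated actions satisfies (ln n)^{m−1}/(m−1)! ≤ E[U^C(m,n)] ≤ Σ_{k=0}^{m−1} (ln n)^k/k!. -/

import Mathlib

open Finset Filter

noncomputable section

/-- Row action `i` is strictly dominated in the restricted game with Row actions `X`
and Column actions `Y`, for Row payoff matrix `R`. -/
def RowDomIn {m n : ℕ} (R : Fin m → Fin n → ℝ) (X : Finset (Fin m)) (Y : Finset (Fin n))
    (i : Fin m) : Prop :=
  ∃ i' ∈ X, ∀ j ∈ Y, R i j < R i' j

/-- Column action `j` is strictly dominated in the restricted game with Row actions `X`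
and Column actions `Y`, for Column payoff matrix `C`. -/
def ColDomIn {m n : ℕ} (C : Fin m → Fin n → ℝ) (X : Finset (Fin m)) (Y : Finset (Fin n))
    (j : Fin n) : Prop :=
  ∃ j' ∈ Y, ∀ i ∈ X, C i j < C i j'

open Classical in
/-- One round of iterated elimination: simultaneously delete every strictly dominated
action of both players in the current restricted game. -/
def elimStep {m n : ℕ} (R C : Fin m → Fin n → ℝ)
    (p : Finset (Fin m) × Finset (Fin n)) : Finset (Fin m) × Finset (Fin n) :=
  (p.1.filter fun i => ¬ RowDomIn R p.1 p.2 i,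
   p.2.filter fun j => ¬ ColDomIn C p.1 p.2 j)

/-- Surviving actions of the subgame `(p.1, p.2)` after iterated elimination of strictly
dominated actions (iterating `m + n` times surely reaches the fixed point). -/
def survivorsFrom {m n : ℕ} (R C : Fin m → Fin n → ℝ)
    (p : Finset (Fin m) × Finset (Fin n)) : Finset (Fin m) × Finset (Fin n) :=
  (elimStep R C)^[m + n] p

/-- The subgame `(p.1, p.2)` is strict-dominance solvable: exactly one action of each
player survives iterated elimination of strictly dominated actions. -/
def SolvableFrom {m n : ℕ} (R C : Fin m → Fin n → ℝ)
    (p : Finset (Fin m) × Finset (Fin n)) : Prop :=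
  (survivorsFrom R C p).1.card = 1 ∧ (survivorsFrom R C p).2.card = 1

/-- Surviving actions of the full game after iterated elimination. -/
def survivors {m n : ℕ} (R C : Fin m → Fin n → ℝ) : Finset (Fin m) × Finset (Fin n) :=
  survivorsFrom R C (Finset.univ, Finset.univ)

/-- The game is strict-dominance solvable. -/
def Solvable {m n : ℕ} (R C : Fin m → Fin n → ℝ) : Prop :=
  SolvableFrom R C (Finset.univ, Finset.univ)

/-- The number of rounds performed by the iterated elimination procedure:
the least `k` such that round `k + 1` deletes nothing more. -/
def elimRounds {m n : ℕ} (R C : Fin m → Fin n → ℝ) : ℕ :=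
  sInf {k | (elimStep R C)^[k + 1] (Finset.univ, Finset.univ)
          = (elimStep R C)^[k] (Finset.univ, Finset.univ)}

/-- Sample space of the random game `G(m,n)`: for each Column action an i.i.d. uniform
permutation giving Row's ordinal payoffs in that column, and for each Row action an
i.i.d. uniform permutation giving Column's ordinal payoffs in that row. -/
abbrev Omega (m n : ℕ) := (Fin n → Equiv.Perm (Fin m)) × (Fin m → Equiv.Perm (Fin n))

/-- Row's payoff matrix of the realized game. -/
def RPay {m n : ℕ} (ω : Omega m n) : Fin m → Fin n → ℝ := fun i j => ((ω.1 j) i : ℕ)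

/-- Column's payoff matrix of the realized game. -/
def CPay {m n : ℕ} (ω : Omega m n) : Fin m → Fin n → ℝ := fun i j => ((ω.2 i) j : ℕ)

/-- Probability of an event under the uniform distribution on `Omega m n`
(i.e. all `m + n` permutations uniform and mutually independent). -/
def Pr {m n : ℕ} (E : Set (Omega m n)) : ℝ :=
  (E.toFinite.toFinset.card : ℝ) / (Fintype.card (Omega m n) : ℝ)

open Classical in
/-- Number of Row actions that are not strictly dominated. -/
def UR {m n : ℕ} (ω : Omega m n) : ℕ :=
  (Finset.univ.filter fun i => ¬ RowDomIn (RPay ω) Finset.univ Finset.univ i).card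

open Classical in
/-- Number of Column actions that are not strictly dominated. -/
def UC {m n : ℕ} (ω : Omega m n) : ℕ :=
  (Finset.univ.filter fun j => ¬ ColDomIn (CPay ω) Finset.univ Finset.univ j).card

/-- Number of Row actions surviving iterated elimination. -/
def SR {m n : ℕ} (ω : Omega m n) : ℕ := (survivors (RPay ω) (CPay ω)).1.card

/-- Number of Column actions surviving iterated elimination. -/
def SC {m n : ℕ} (ω : Omega m n) : ℕ := (survivors (RPay ω) (CPay ω)).2.card

/-- The realized game is strict-dominance solvable. -/
def GameSolvable {m n : ℕ} (ω : Omega m n) : Prop := Solvable (RPay ω) (CPay ω)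

/-- Number of rounds of the iterated elimination procedure in the realized game. -/
def GameRounds {m n : ℕ} (ω : Omega m n) : ℕ := elimRounds (RPay ω) (CPay ω)

/-- `π(m,n)`: probability that the random game `G(m,n)` is strict-dominance solvable. -/
def probSolvable (m n : ℕ) : ℝ := Pr {ω : Omega m n | GameSolvable ω}

/-- Expected number of Column's strictly undominated actions, `E[U^C(m,n)]`. -/
def expUC (m n : ℕ) : ℝ :=
  (∑ ω : Omega m n, (UC ω : ℝ)) / (Fintype.card (Omega m n) : ℝ)

/-- Expected number of Column actions surviving iterated elimination, `E[S^C(m,n)]`. -/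
def expSC (m n : ℕ) : ℝ :=
  (∑ ω : Omega m n, (SC ω : ℝ)) / (Fintype.card (Omega m n) : ℝ)

open Classical in
/-- `E[I(m,n)]`: expected number of elimination rounds conditional on the game being
strict-dominance solvable. -/
def condExpRounds (m n : ℕ) : ℝ :=
  (∑ ω : Omega m n, if GameSolvable ω then (GameRounds ω : ℝ) else 0) /
    (∑ ω : Omega m n, if GameSolvable ω then (1 : ℝ) else 0)

/-- Unsigned Stirling numbers of the first kind. -/
def stirling1 : ℕ → ℕ → ℕ
  | 0, 0 => 1
  | 0, _ + 1 => 0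
  | _ + 1, 0 => 0
  | n + 1, k + 1 => n * stirling1 n (k + 1) + stirling1 n k

end


section Proofs
open Finset

/-- Counting lemma: the number of permutations σ with σ j < σ j' for all j' in S
(j ∉ S) is (n!)/(|S|+1), in multiplied-out form. -/
theorem count_min_perms {n : ℕ} (j : Fin n) (S : Finset (Fin n)) (hj : j ∉ S) :
    (S.card + 1) * (univ.filter fun σ : Equiv.Perm (Fin n) => ∀ j' ∈ S, σ j < σ j').card
      = (Fintype.card (Fin n)).factorial := by
  classical
  set A : Finset (Fin n) := insert j S with hA
  have hAcard : A.card = S.card + 1 := Finset.card_insert_of_notMem hj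
  set B : Fin n → Finset (Equiv.Perm (Fin n)) := fun a =>
    univ.filter fun σ => ∀ x ∈ A, x ≠ a → σ a < σ x with hB
  -- the B a for a ∈ A partition all permutations
  have hcover : ∀ σ : Equiv.Perm (Fin n), ∃! a, a ∈ A ∧ σ ∈ B a := by
    intro σ
    obtain ⟨a, haA, hmin⟩ := A.exists_min_image σ ⟨j, Finset.mem_insert_self j S⟩
    refine ⟨a, ⟨haA, ?_⟩, ?_⟩
    · simp only [hB, Finset.mem_filter, Finset.mem_univ, true_and]
      intro x hx hxa
      exact lt_of_le_of_ne (hmin x hx) (fun h => hxa (σ.injective h.symm))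
    · rintro b ⟨hbA, hbB⟩
      by_contra hba
      simp only [hB, Finset.mem_filter, Finset.mem_univ, true_and] at hbB
      have h1 : σ b < σ a := hbB a haA (fun h => hba h.symm)
      exact absurd (hmin b hbA) (not_le.mpr h1)
  have hdisj : (A : Set (Fin n)).PairwiseDisjoint B := by
    intro a ha b hb hab
    simp only [Finset.disjoint_left]
    intro σ hσa hσb
    obtain ⟨c, _, hu⟩ := hcover σ
    exact hab ((hu a ⟨ha, hσa⟩).trans (hu b ⟨hb, hσb⟩).symm)
  have hbiUnion : A.biUnion B = univ := by
    ext σ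
    simp only [Finset.mem_biUnion, Finset.mem_univ, iff_true]
    obtain ⟨a, ⟨ha, hσ⟩, _⟩ := hcover σ
    exact ⟨a, ha, hσ⟩
  have hsum : ∑ a ∈ A, (B a).card = (Fintype.card (Fin n)).factorial := by
    rw [← Finset.card_biUnion (fun a ha b hb hab => hdisj ha hb hab), hbiUnion,
      Finset.card_univ, Fintype.card_perm]
  have hsame : ∀ a ∈ A, (B a).card = (B j).card := by
    intro a ha
    rcases eq_or_ne a j with rfl | haj
    · rfl
    refine Finset.card_bij' (fun σ _ => σ * Equiv.swap j a) (fun σ _ => σ * Equiv.swap j a)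
      ?_ ?_ ?_ ?_
    · intro σ hσ
      simp only [hB, Finset.mem_filter, Finset.mem_univ, true_and] at hσ ⊢
      intro x hx hxj
      have e1 : (σ * Equiv.swap j a) j = σ a := by
        simp [Equiv.Perm.mul_apply, Equiv.swap_apply_left]
      rcases eq_or_ne x a with hxa | hxa
      · have e2 : (σ * Equiv.swap j a) x = σ j := by
          rw [hxa]; simp [Equiv.Perm.mul_apply, Equiv.swap_apply_right]
        rw [e1, e2]
        exact hσ j (Finset.mem_insert_self j S) haj.symm
      · have e2 : (σ * Equiv.swap j a) x = σ x := by
          simp [Equiv.Perm.mul_apply, Equiv.swap_apply_of_ne_of_ne hxj hxa]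
        rw [e1, e2]
        exact hσ x hx hxa
    · intro σ hσ
      simp only [hB, Finset.mem_filter, Finset.mem_univ, true_and] at hσ ⊢
      intro x hx hxa
      have e1 : (σ * Equiv.swap j a) a = σ j := by
        simp [Equiv.Perm.mul_apply, Equiv.swap_apply_right]
      rcases eq_or_ne x j with hxj | hxj
      · have e2 : (σ * Equiv.swap j a) x = σ a := by
          rw [hxj]; simp [Equiv.Perm.mul_apply, Equiv.swap_apply_left]
        rw [e1, e2]
        exact hσ a ha haj
      · have e2 : (σ * Equiv.swap j a) x = σ x := by
          simp [Equiv.Perm.mul_apply, Equiv.swap_apply_of_ne_of_ne hxj hxa]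
        rw [e1, e2]
        exact hσ x hx hxj
    · intro σ _; ext y; simp [Equiv.Perm.mul_apply]
    · intro σ _; ext y; simp [Equiv.Perm.mul_apply]
  have hBj : B j = univ.filter fun σ : Equiv.Perm (Fin n) => ∀ j' ∈ S, σ j < σ j' := by
    ext σ
    simp only [hB, Finset.mem_filter, Finset.mem_univ, true_and]
    constructor
    · intro h j' hj'
      exact h j' (Finset.mem_insert_of_mem hj') (fun he => hj (he ▸ hj'))
    · intro h x hx hxj
      rcases Finset.mem_insert.mp hx with rfl | hxS
      · exact absurd rfl hxj
      · exact h x hxS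
  calc (S.card + 1) * (univ.filter fun σ : Equiv.Perm (Fin n) => ∀ j' ∈ S, σ j < σ j').card
      = ∑ _a ∈ A, (B j).card := by rw [Finset.sum_const, hAcard, hBj, smul_eq_mul]
    _ = ∑ a ∈ A, (B a).card := (Finset.sum_congr rfl hsame).symm
    _ = (Fintype.card (Fin n)).factorial := hsum


noncomputable def Aval (s n : ℕ) : ℝ :=
  ∑ k ∈ Finset.Icc 1 n, (-1 : ℝ) ^ (k + 1) * (n.choose k : ℝ) / (k : ℝ) ^ s

lemma ie_lemma {α : Type*} [DecidableEq α] (E Dv : Finset α) (hDE : Dv ⊆ E) :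
    ∑ S ∈ E.powerset, (-1 : ℝ) ^ S.card * (if S ⊆ Dv then 1 else 0)
      = if Dv = ∅ then 1 else 0 := by
  have h0 : ∑ S ∈ Dv.powerset, (-1 : ℝ) ^ S.card = if Dv = ∅ then 1 else 0 := by
    have hz : ∑ S ∈ Dv.powerset, (-1 : ℤ) ^ S.card = if Dv = ∅ then 1 else 0 :=
      Finset.sum_powerset_neg_one_pow_card
    have : ((∑ S ∈ Dv.powerset, (-1 : ℤ) ^ S.card : ℤ) : ℝ)
        = ((if Dv = ∅ then (1:ℤ) else 0 : ℤ) : ℝ) := by exact_mod_cast hz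
    push_cast at this
    rw [this]
  rw [← h0]
  rw [← Finset.sum_subset (Finset.powerset_mono.mpr hDE) (by
    intro S hS hSD
    rw [Finset.mem_powerset] at hSD
    simp [hSD])]
  apply Finset.sum_congr rfl
  intro S hS
  rw [Finset.mem_powerset] at hS
  simp [hS]

lemma sum_Icc_one (n : ℕ) (g : ℕ → ℝ) :
    ∑ k ∈ Finset.Icc 1 n, g k = ∑ k ∈ Finset.range n, g (k+1) := by
  induction n with
  | zero => simp
  | succ n ih => rw [Finset.sum_range_succ, ← ih, Finset.sum_Icc_succ_top (by omega)]

open Classical in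
theorem expUC_eq (m n : ℕ) (hm : 1 ≤ m) (hn : 1 ≤ n) : expUC m n = Aval (m - 1) n := by
  classical
  -- abbreviations
  set F : Fin n → Finset (Fin n) → Finset (Equiv.Perm (Fin n)) := fun j S =>
    univ.filter fun σ => ∀ j' ∈ S, σ j < σ j' with hF
  set D : (Fin m → Equiv.Perm (Fin n)) → Fin n → Finset (Fin n) := fun τ j =>
    univ.filter fun j' => ∀ i, τ i j < τ i j' with hD
  -- step 1 : UC only depends on second component
  have hUC : ∀ ω : Omega m n, UC ω =
      (univ.filter fun j : Fin n => D ω.2 j = ∅).card := by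
    intro ω
    unfold UC
    congr 1
    apply Finset.filter_congr
    intro j _
    simp only [ColDomIn, CPay, hD, Finset.mem_univ, true_implies, eq_iff_iff]
    rw [← Finset.not_nonempty_iff_eq_empty, Finset.filter_nonempty_iff]
    simp only [Finset.mem_univ, true_and, not_exists]
    constructor
    · intro h j' hc
      exact h j' (fun i => by exact_mod_cast hc i)
    · intro h j' hc
      exact h j' (fun i => by exact_mod_cast hc i)
  -- step 2: reduce to sum over τ
  have hcard1 : (0:ℝ) < (Fintype.card (Fin n → Equiv.Perm (Fin m)) : ℝ) := by
    positivity
  have hsplit : expUC m n =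
      (∑ τ : Fin m → Equiv.Perm (Fin n), ((univ.filter fun j : Fin n => D τ j = ∅).card : ℝ))
        / (Fintype.card (Fin m → Equiv.Perm (Fin n)) : ℝ) := by
    unfold expUC
    rw [Fintype.sum_prod_type]
    have : ∀ ρ : Fin n → Equiv.Perm (Fin m),
        ∑ τ : Fin m → Equiv.Perm (Fin n), (UC (ρ, τ) : ℝ)
          = ∑ τ : Fin m → Equiv.Perm (Fin n),
              ((univ.filter fun j : Fin n => D τ j = ∅).card : ℝ) := by
      intro ρ
      exact Finset.sum_congr rfl fun τ _ => by rw [hUC (ρ, τ)]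
    rw [Finset.sum_congr rfl fun ρ _ => this ρ, Finset.sum_const, Finset.card_univ]
    have hcardO : (Fintype.card (Omega m n) : ℝ)
        = (Fintype.card (Fin n → Equiv.Perm (Fin m)) : ℝ)
          * (Fintype.card (Fin m → Equiv.Perm (Fin n)) : ℝ) := by
      rw [← Nat.cast_mul]
      congr 1
      exact Fintype.card_prod _ _
    rw [hcardO, nsmul_eq_mul]
    rw [mul_div_mul_left _ _ hcard1.ne']
  -- step 3: inclusion-exclusion and product counting
  have hDsub : ∀ (τ : Fin m → Equiv.Perm (Fin n)) (j : Fin n), D τ j ⊆ univ.erase j := by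
    intro τ j j' hj'
    simp only [hD, Finset.mem_filter] at hj'
    rw [Finset.mem_erase]
    refine ⟨fun he => ?_, Finset.mem_univ _⟩
    have := hj'.2 ⟨0, hm⟩
    rw [he] at this
    exact lt_irrefl _ this
  have hprodcount : ∀ (j : Fin n) (S : Finset (Fin n)),
      ∑ τ : Fin m → Equiv.Perm (Fin n), (if S ⊆ D τ j then (1:ℝ) else 0)
        = ((F j S).card : ℝ) ^ m := by
    intro j S
    rw [Finset.sum_boole]
    have hset : (univ.filter fun τ : Fin m → Equiv.Perm (Fin n) => S ⊆ D τ j)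
        = Fintype.piFinset (fun _ : Fin m => F j S) := by
      ext τ
      simp only [Finset.mem_filter, Finset.mem_univ, true_and, Fintype.mem_piFinset, hF,
        hD, Finset.subset_iff]
      constructor
      · intro h i j' hj'
        exact h hj' i
      · intro h j' hj' i
        exact h i j' hj'
    rw [hset, Fintype.card_piFinset]
    push_cast
    rw [Finset.prod_const, Finset.card_univ, Fintype.card_fin]
  have hmain : (∑ τ : Fin m → Equiv.Perm (Fin n),
      ((univ.filter fun j : Fin n => D τ j = ∅).card : ℝ))
      = ∑ j : Fin n, ∑ S ∈ (univ.erase j).powerset,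
          (-1 : ℝ) ^ S.card * ((F j S).card : ℝ) ^ m := by
    have step : ∀ τ : Fin m → Equiv.Perm (Fin n),
        ((univ.filter fun j : Fin n => D τ j = ∅).card : ℝ)
          = ∑ j : Fin n, ∑ S ∈ (univ.erase j).powerset,
              (-1 : ℝ) ^ S.card * (if S ⊆ D τ j then (1:ℝ) else 0) := by
      intro τ
      rw [Finset.card_filter]
      push_cast
      apply Finset.sum_congr rfl
      intro j _
      rw [ie_lemma _ _ (hDsub τ j)]
    rw [Finset.sum_congr rfl fun τ _ => step τ]
    rw [Finset.sum_comm]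
    apply Finset.sum_congr rfl
    intro j _
    rw [Finset.sum_comm]
    apply Finset.sum_congr rfl
    intro S _
    rw [← Finset.mul_sum, hprodcount j S]
  -- step 4: evaluate card F via counting lemma and simplify
  have hc2 : (Fintype.card (Fin m → Equiv.Perm (Fin n)) : ℝ) = ((n.factorial : ℝ)) ^ m := by
    rw [Fintype.card_fun, Fintype.card_perm, Fintype.card_fin, Fintype.card_fin]
    push_cast
    ring
  have hnfac : (0:ℝ) < (n.factorial : ℝ) := by positivity
  have hFval : ∀ (j : Fin n), ∀ S ∈ (univ.erase j).powerset,
      ((F j S).card : ℝ) = (n.factorial : ℝ) / ((S.card : ℝ) + 1) := by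
    intro j S hS
    have hjS : j ∉ S := fun h =>
      (Finset.mem_erase.mp ((Finset.mem_powerset.mp hS) h)).1 rfl
    have := count_min_perms j S hjS
    rw [Fintype.card_fin] at this
    have : ((S.card : ℝ) + 1) * ((F j S).card : ℝ) = (n.factorial : ℝ) := by
      exact_mod_cast this
    field_simp [← this]
    linarith [this]
  have hform : expUC m n = ∑ j : Fin n, ∑ S ∈ (univ.erase j).powerset,
      (-1 : ℝ) ^ S.card / ((S.card : ℝ) + 1) ^ m := by
    rw [hsplit, hmain, hc2, Finset.sum_div]
    apply Finset.sum_congr rfl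
    intro j _
    rw [Finset.sum_div]
    apply Finset.sum_congr rfl
    intro S hS
    rw [hFval j S hS]
    have h1 : ((S.card : ℝ) + 1) ≠ 0 := by positivity
    rw [div_pow]
    field_simp
  -- step 5: group by cardinality
  have hgroup : ∀ j : Fin n, ∑ S ∈ (univ.erase j).powerset,
      (-1 : ℝ) ^ S.card / ((S.card : ℝ) + 1) ^ m
      = ∑ k ∈ Finset.range n, ((n-1).choose k : ℝ) * ((-1 : ℝ) ^ k / ((k : ℝ) + 1) ^ m) := by
    intro j
    rw [Finset.sum_powerset]
    have hcard : (univ.erase j).card = n - 1 := by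
      rw [Finset.card_erase_of_mem (Finset.mem_univ j), Finset.card_univ, Fintype.card_fin]
    rw [hcard]
    have hrange : n - 1 + 1 = n := Nat.succ_pred_eq_of_pos hn
    rw [hrange]
    apply Finset.sum_congr rfl
    intro k _
    have : ∀ S ∈ Finset.powersetCard k (univ.erase j),
        (-1 : ℝ) ^ S.card / ((S.card : ℝ) + 1) ^ m
          = (-1 : ℝ) ^ k / ((k : ℝ) + 1) ^ m := by
      intro S hS
      rw [(Finset.mem_powersetCard.mp hS).2]
    rw [Finset.sum_congr rfl this, Finset.sum_const, Finset.card_powersetCard, hcard,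
      nsmul_eq_mul]
  rw [hform, Finset.sum_congr rfl fun j _ => hgroup j, Finset.sum_const, Finset.card_univ,
    Fintype.card_fin, nsmul_eq_mul]
  -- step 6: reindex to Aval
  unfold Aval
  rw [sum_Icc_one]
  rw [Finset.mul_sum]
  apply Finset.sum_congr rfl
  intro k hk
  have hch : (n : ℝ) * ((n-1).choose k : ℝ) = ((k : ℝ) + 1) * (n.choose (k+1) : ℝ) := by
    have h2 := Nat.add_one_mul_choose_eq (n-1) k
    rw [Nat.sub_add_cancel hn] at h2
    rw [Nat.mul_comm (n.choose (k+1))] at h2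
    exact_mod_cast h2
  have hkpos : (0:ℝ) < (k : ℝ) + 1 := by positivity
  have hpow : ((k : ℝ) + 1) ^ m = ((k : ℝ) + 1) ^ (m - 1) * ((k : ℝ) + 1) := by
    rw [← pow_succ]
    congr 1
    omega
  have hsign : (-1 : ℝ) ^ (k + 1 + 1) = (-1 : ℝ) ^ k := by
    rw [show k + 1 + 1 = k + 2 by ring, pow_add]
    norm_num
  push_cast
  rw [hsign]
  rw [show ((n:ℝ) * (((n-1).choose k : ℝ) * ((-1:ℝ)^k / ((k:ℝ)+1)^m)))
      = ((n:ℝ) * ((n-1).choose k : ℝ)) * ((-1:ℝ)^k / ((k:ℝ)+1)^m) from by ring, hch, hpow]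
  have hp1 : ((k : ℝ) + 1) ^ (m-1) ≠ 0 := by positivity
  field_simp

/-- range-indexed form of the alternating binomial sum -/
noncomputable def Aval' (s n : ℕ) : ℝ :=
  ∑ k ∈ Finset.range n, (-1 : ℝ) ^ k * (n.choose (k+1) : ℝ) / ((k : ℝ) + 1) ^ s

lemma Aval'_zero (n : ℕ) (hn : 1 ≤ n) : Aval' 0 n = 1 := by
  have hz : ∑ i ∈ Finset.range (n+1), (-1 : ℤ) ^ i * (n.choose i) = 0 := by
    rw [Int.alternating_sum_range_choose, if_neg (by omega)]
  have hzR : ∑ i ∈ Finset.range (n+1), (-1 : ℝ) ^ i * (n.choose i : ℝ) = 0 := by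
    exact_mod_cast hz
  have h2 := Finset.sum_range_succ' (fun i => (-1 : ℝ) ^ i * (n.choose i : ℝ)) n
  rw [hzR] at h2
  simp only [pow_zero, Nat.choose_zero_right, Nat.cast_one, one_mul, pow_succ] at h2
  have h5 : ∑ i ∈ Finset.range n, (-1 : ℝ) ^ i * (-1) * (n.choose (i+1) : ℝ)
      = - ∑ i ∈ Finset.range n, (-1 : ℝ) ^ i * (n.choose (i+1) : ℝ) := by
    rw [← Finset.sum_neg_distrib]
    apply Finset.sum_congr rfl
    intro i _
    ring
  rw [h5] at h2
  unfold Aval'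
  have : ∀ k ∈ Finset.range n, (-1 : ℝ) ^ k * (n.choose (k+1) : ℝ) / ((k : ℝ) + 1) ^ 0
      = (-1 : ℝ) ^ k * (n.choose (k+1) : ℝ) := by
    intro k _
    simp
  rw [Finset.sum_congr rfl this]
  linarith

lemma Aval'_one (s : ℕ) : Aval' s 1 = 1 := by
  simp [Aval']

lemma Aval'_succ_succ (s n : ℕ) :
    Aval' (s+1) (n+1) = Aval' (s+1) n + Aval' s (n+1) / ((n : ℝ) + 1) := by
  have hext : Aval' (s+1) n = ∑ k ∈ Finset.range (n+1),
      (-1 : ℝ) ^ k * (n.choose (k+1) : ℝ) / ((k : ℝ) + 1) ^ (s+1) := by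
    rw [Finset.sum_range_succ]
    simp [Aval', Nat.choose_eq_zero_of_lt (Nat.lt_succ_self n)]
  rw [hext, Aval', Aval', Finset.sum_div, ← Finset.sum_add_distrib]
  apply Finset.sum_congr rfl
  intro k _
  have hpascal : ((n+1).choose (k+1) : ℝ) = (n.choose k : ℝ) + (n.choose (k+1) : ℝ) := by
    exact_mod_cast congrArg (Nat.cast (R := ℝ)) (Nat.choose_succ_succ n k)
  have hid : ((n : ℝ) + 1) * (n.choose k : ℝ) = ((k : ℝ) + 1) * ((n+1).choose (k+1) : ℝ) := by
    have h2 := Nat.add_one_mul_choose_eq n k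
    rw [Nat.mul_comm ((n+1).choose (k+1))] at h2
    exact_mod_cast h2
  have hk : ((k : ℝ) + 1) ≠ 0 := by positivity
  have hn1 : ((n : ℝ) + 1) ≠ 0 := by positivity
  rw [hpascal]
  field_simp
  linear_combination (((k:ℝ)+1)^s) * hid + (((k:ℝ)+1)^(s+1)) * hpascal

/-! ### Lower bound -/

noncomputable def Hsum (n : ℕ) : ℝ := ∑ t ∈ Finset.range n, 1/((t:ℝ)+1)

lemma Hsum_nonneg (n : ℕ) : 0 ≤ Hsum n := by
  unfold Hsum; positivity

lemma Hsum_succ (n : ℕ) : Hsum (n+1) = Hsum n + 1/((n:ℝ)+1) := by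
  unfold Hsum; rw [Finset.sum_range_succ]

lemma Hsum_mono {a b : ℕ} (h : a ≤ b) : Hsum a ≤ Hsum b := by
  unfold Hsum
  apply Finset.sum_le_sum_of_subset_of_nonneg (Finset.range_subset_range.mpr h)
  intro t _ _; positivity

lemma log_add_one_le_Hsum (n : ℕ) : Real.log ((n:ℝ)+1) ≤ Hsum n := by
  induction n with
  | zero => simp [Hsum]
  | succ n ih =>
    have hpos : (0:ℝ) < (n:ℝ)+1 := by positivity
    have hkey : Real.log ((n:ℝ)+2) - Real.log ((n:ℝ)+1) ≤ 1/((n:ℝ)+1) := by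
      rw [← Real.log_div (by positivity) (by positivity)]
      calc Real.log (((n:ℝ)+2)/((n:ℝ)+1)) ≤ ((n:ℝ)+2)/((n:ℝ)+1) - 1 := by
            apply Real.log_le_sub_one_of_pos; positivity
        _ = 1/((n:ℝ)+1) := by
            rw [div_sub_one (by positivity : ((n:ℝ)+1) ≠ 0)]
            ring_nf
    rw [Hsum_succ]
    push_cast
    have : ((n:ℝ) + 1 + 1) = (n:ℝ) + 2 := by ring
    rw [this]
    linarith

lemma log_le_Hsum (n : ℕ) (hn : 1 ≤ n) : Real.log n ≤ Hsum n := by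
  rcases Nat.exists_eq_add_of_le hn with ⟨k, rfl⟩
  calc Real.log ((1+k : ℕ) : ℝ) = Real.log ((k:ℝ)+1) := by norm_num [add_comm]
    _ ≤ Hsum k := log_add_one_le_Hsum k
    _ ≤ Hsum (1+k) := Hsum_mono (by omega)

lemma pow_sub_pow_le (p : ℕ) {a b : ℝ} (ha : 0 ≤ a) (hab : a ≤ b) :
    b^(p+1) - a^(p+1) ≤ ((p:ℝ)+1) * b^p * (b-a) := by
  induction p with
  | zero => simp
  | succ p ih =>
    have hb : 0 ≤ b := le_trans ha hab
    have hap : a^(p+1) ≤ b^(p+1) := pow_le_pow_left₀ ha hab (p+1)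
    have hbp : 0 ≤ b^p := pow_nonneg hb p
    calc b^(p+2) - a^(p+2) = b*(b^(p+1) - a^(p+1)) + (b-a)*a^(p+1) := by ring
      _ ≤ b*(((p:ℝ)+1) * b^p * (b-a)) + (b-a)*b^(p+1) := by
          have h1 : b*(b^(p+1) - a^(p+1)) ≤ b*(((p:ℝ)+1) * b^p * (b-a)) :=
            mul_le_mul_of_nonneg_left ih hb
          have h2 : (b-a)*a^(p+1) ≤ (b-a)*b^(p+1) :=
            mul_le_mul_of_nonneg_left hap (by linarith)
          linarith
      _ = (((p+1:ℕ):ℝ)+1) * b^(p+1) * (b-a) := by push_cast; ring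


lemma Aval'_sum (s n : ℕ) (hn : 1 ≤ n) :
    Aval' (s+1) n = ∑ t ∈ Finset.range n, Aval' s (t+1) / ((t:ℝ)+1) := by
  induction n with
  | zero => omega
  | succ n ih =>
    rcases Nat.eq_or_lt_of_le hn with h1 | h2
    · simp [← h1, Aval'_one]
    · have hn' : 1 ≤ n := by omega
      rw [Aval'_succ_succ, ih hn', Finset.sum_range_succ]

lemma telescope_pow (s n : ℕ) :
    Hsum n ^ (s+1) ≤ ((s:ℝ)+1) * ∑ t ∈ Finset.range n, Hsum (t+1)^s / ((t:ℝ)+1) := by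
  induction n with
  | zero => simp [Hsum]
  | succ n ih =>
    rw [Finset.sum_range_succ, mul_add]
    have hstep : Hsum (n+1)^(s+1) - Hsum n^(s+1)
        ≤ ((s:ℝ)+1) * (Hsum (n+1)^s / ((n:ℝ)+1)) := by
      have h1 := pow_sub_pow_le s (Hsum_nonneg n) (Hsum_mono (Nat.le_succ n))
      have h2 : Hsum (n+1) - Hsum n = 1/((n:ℝ)+1) := by rw [Hsum_succ]; ring
      rw [h2] at h1
      calc Hsum (n+1)^(s+1) - Hsum n^(s+1) ≤ ((s:ℝ)+1) * Hsum (n+1)^s * (1/((n:ℝ)+1)) := h1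
        _ = ((s:ℝ)+1) * (Hsum (n+1)^s / ((n:ℝ)+1)) := by ring
    linarith

lemma lower_bound (s n : ℕ) (hn : 1 ≤ n) :
    Hsum n ^ s / (Nat.factorial s : ℝ) ≤ Aval' s n := by
  induction s generalizing n with
  | zero => simp [Aval'_zero n hn]
  | succ s ih =>
    rw [Aval'_sum s n hn]
    have hterm : ∀ t ∈ Finset.range n,
        Hsum (t+1)^s / (Nat.factorial s : ℝ) / ((t:ℝ)+1) ≤ Aval' s (t+1) / ((t:ℝ)+1) := by
      intro t _
      apply div_le_div_of_nonneg_right _ (by positivity)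
      · exact ih (t+1) (by omega)
    have hsum := Finset.sum_le_sum hterm
    have heq : ∑ t ∈ Finset.range n, Hsum (t+1)^s / (Nat.factorial s : ℝ) / ((t:ℝ)+1)
        = (∑ t ∈ Finset.range n, Hsum (t+1)^s / ((t:ℝ)+1)) / (Nat.factorial s : ℝ) := by
      rw [Finset.sum_div]
      apply Finset.sum_congr rfl
      intro t _
      ring
    have hfacpos : (0:ℝ) < (Nat.factorial s : ℝ) := by positivity
    have htel := telescope_pow s n
    have : Hsum n ^ (s+1) / (Nat.factorial (s+1) : ℝ)
        ≤ (∑ t ∈ Finset.range n, Hsum (t+1)^s / ((t:ℝ)+1)) / (Nat.factorial s : ℝ) := by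
      rw [Nat.factorial_succ]
      push_cast
      rw [div_le_div_iff₀ (by positivity) (by positivity)]
      calc Hsum n ^ (s+1) * (Nat.factorial s : ℝ)
          ≤ (((s:ℝ)+1) * ∑ t ∈ Finset.range n, Hsum (t+1)^s / ((t:ℝ)+1)) * (Nat.factorial s : ℝ) := by
            apply mul_le_mul_of_nonneg_right htel (le_of_lt hfacpos)
        _ = (∑ t ∈ Finset.range n, Hsum (t+1)^s / ((t:ℝ)+1)) * (((s:ℝ)+1) * (Nat.factorial s : ℝ)) := by
            ring
      
    linarith [hsum, heq ▸ hsum]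

/-! ### Upper bound -/

noncomputable def Tf (s : ℕ) (x : ℝ) : ℝ := ∑ k ∈ Finset.range (s+1), x^k / (Nat.factorial k : ℝ)

lemma Tf_zero (x : ℝ) : Tf 0 x = 1 := by simp [Tf]

lemma Tf_at_zero (s : ℕ) : Tf s 0 = 1 := by
  unfold Tf
  rw [Finset.sum_eq_single 0]
  · simp
  · intro k _ hk
    rcases Nat.exists_eq_succ_of_ne_zero hk with ⟨j, rfl⟩
    simp [zero_pow]
  · simp

lemma Tf_succ (s : ℕ) (x : ℝ) : Tf (s+1) x = Tf s x + x^(s+1) / (Nat.factorial (s+1) : ℝ) := by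
  unfold Tf
  rw [Finset.sum_range_succ]

lemma Tf_nonneg (s : ℕ) {x : ℝ} (hx : 0 ≤ x) : 0 ≤ Tf s x := by
  unfold Tf
  apply Finset.sum_nonneg
  intro k _
  positivity

lemma Tf_hasDerivAt (s : ℕ) (x : ℝ) : HasDerivAt (fun y => Tf (s+1) y) (Tf s x) x := by
  have h : HasDerivAt (fun y : ℝ => ∑ k ∈ Finset.range (s+2), y^k / (Nat.factorial k : ℝ))
      (∑ k ∈ Finset.range (s+2), (k : ℝ) * x^(k-1) / (Nat.factorial k : ℝ)) x := by
    apply HasDerivAt.fun_sum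
    intro k _
    simpa [div_eq_mul_inv] using (hasDerivAt_pow k x).div_const ((Nat.factorial k : ℝ))
  have heq : ∑ k ∈ Finset.range (s+2), (k : ℝ) * x^(k-1) / (Nat.factorial k : ℝ) = Tf s x := by
    rw [Finset.sum_range_succ' (fun k => (k : ℝ) * x^(k-1) / (Nat.factorial k : ℝ)) (s+1)]
    simp only [Nat.cast_zero, zero_mul, zero_div, add_zero]
    unfold Tf
    apply Finset.sum_congr rfl
    intro k _
    have : ((k+1 : ℕ) : ℝ) * x^(k+1-1) / (Nat.factorial (k+1) : ℝ) = x^k / (Nat.factorial k : ℝ) := by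
      rw [Nat.factorial_succ, Nat.add_sub_cancel]
      push_cast
      have hne : ((k:ℝ)+1) ≠ 0 := by positivity
      have hf : (Nat.factorial k : ℝ) ≠ 0 := by positivity
      field_simp
    rw [this]
  rw [← heq]
  exact h

lemma key_step (s : ℕ) {a b : ℝ} (ha : 0 ≤ a) (hab : a ≤ b) :
    Tf (s+1) a + (1 - Real.exp (a - b)) * Tf s b ≤ Tf (s+1) b := by
  have hb : 0 ≤ b := le_trans ha hab
  set B : ℝ := b^(s+1) / (Nat.factorial (s+1) : ℝ) with hB
  set φ : ℝ → ℝ := fun x => Real.exp (-x) * (B - Tf (s+1) x) with hφ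
  have hderiv : ∀ x : ℝ, HasDerivAt φ (Real.exp (-x) * (x^(s+1) / (Nat.factorial (s+1) : ℝ) - B)) x := by
    intro x
    have h1 : HasDerivAt (fun y : ℝ => Real.exp (-y)) (-Real.exp (-x)) x := by
      simpa using (hasDerivAt_neg x).exp
    have h2 : HasDerivAt (fun y : ℝ => B - Tf (s+1) y) (-(Tf s x)) x := by
      simpa using (Tf_hasDerivAt s x).const_sub B
    have := h1.mul h2
    refine HasDerivAt.congr_deriv this ?_
    have hT : Tf (s+1) x = Tf s x + x^(s+1) / (Nat.factorial (s+1) : ℝ) := Tf_succ s x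
    rw [hT]
    ring
  have hanti : AntitoneOn φ (Set.Icc 0 b) := by
    apply antitoneOn_of_deriv_nonpos (convex_Icc 0 b)
    · exact Continuous.continuousOn (by
        apply Continuous.mul
        · exact (Real.continuous_exp.comp continuous_neg)
        · apply Continuous.sub continuous_const
          unfold Tf
          apply continuous_finset_sum
          intro k _
          exact (continuous_pow k).div_const _)
    · intro x _
      exact (hderiv x).differentiableAt.differentiableWithinAt
    · intro x hx
      rw [(hderiv x).deriv]
      rw [interior_Icc, Set.mem_Ioo] at hx
      have hxb : x^(s+1) ≤ b^(s+1) := pow_le_pow_left₀ (le_of_lt hx.1) (le_of_lt hx.2) (s+1)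
      have hexp : 0 < Real.exp (-x) := Real.exp_pos _
      have hfac : (0:ℝ) < (Nat.factorial (s+1) : ℝ) := by positivity
      have hnp : x^(s+1) / (Nat.factorial (s+1) : ℝ) - B ≤ 0 := by
        rw [hB]
        have hdd : x^(s+1) / (Nat.factorial (s+1) : ℝ) ≤ b^(s+1) / (Nat.factorial (s+1) : ℝ) := by
          gcongr
        linarith
      exact mul_nonpos_of_nonneg_of_nonpos (le_of_lt hexp) hnp
  -- use antitonicity between a and b
  have hmem_a : a ∈ Set.Icc 0 b := ⟨ha, hab⟩
  have hmem_b : b ∈ Set.Icc 0 b := ⟨hb, le_refl b⟩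
  have hφab : φ b ≤ φ a := hanti hmem_a hmem_b hab
  -- algebra
  rw [hφ] at hφab
  simp only at hφab
  have hea : 0 < Real.exp a := Real.exp_pos a
  have h2 : Real.exp (a - b) * (B - Tf (s+1) b) ≤ B - Tf (s+1) a := by
    have := mul_le_mul_of_nonneg_left hφab (le_of_lt hea)
    calc Real.exp (a - b) * (B - Tf (s+1) b)
        = Real.exp a * (Real.exp (-b) * (B - Tf (s+1) b)) := by
          rw [← mul_assoc, ← Real.exp_add]
          ring_nf
      _ ≤ Real.exp a * (Real.exp (-a) * (B - Tf (s+1) a)) := this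
      _ = B - Tf (s+1) a := by
          rw [← mul_assoc, ← Real.exp_add]
          simp
  have hTb : Tf (s+1) b = Tf s b + B := by rw [hB, Tf_succ]
  rw [hTb] at h2 ⊢
  have hexp1 : Real.exp (a - b) * (B - (Tf s b + B)) = -(Real.exp (a-b) * Tf s b) := by ring
  rw [hexp1] at h2
  nlinarith [h2]

lemma upper_bound (s n : ℕ) (hn : 1 ≤ n) : Aval' s n ≤ Tf s (Real.log n) := by
  induction n generalizing s with
  | zero => omega
  | succ n ih =>
    rcases Nat.lt_or_ge n 1 with h0 | hn'
    · interval_cases n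
      norm_num [Aval'_one, Tf_at_zero]
    · induction s with
      | zero =>
        rw [Aval'_zero (n+1) (by omega), Tf_zero]
      | succ s ihs =>
        have hnp : (0:ℝ) < (n:ℝ) := by exact_mod_cast hn'
        have hnp1 : (0:ℝ) < (n:ℝ)+1 := by positivity
        have ha : 0 ≤ Real.log n := Real.log_nonneg (by exact_mod_cast hn')
        have hab : Real.log n ≤ Real.log ((n:ℝ)+1) := by
          apply Real.log_le_log hnp
          linarith
        have hE : Real.exp (Real.log n - Real.log ((n:ℝ)+1)) = (n:ℝ)/((n:ℝ)+1) := by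
          rw [Real.exp_sub, Real.exp_log hnp, Real.exp_log hnp1]
        have hcoef : 1 - Real.exp (Real.log n - Real.log ((n:ℝ)+1)) = 1/((n:ℝ)+1) := by
          rw [hE]
          field_simp
          ring
        have hkey := key_step s ha hab
        rw [hcoef] at hkey
        rw [Aval'_succ_succ]
        have h1 : Aval' (s+1) n ≤ Tf (s+1) (Real.log n) := ih (s+1) hn'
        have h2 : Aval' s (n+1) ≤ Tf s (Real.log ((n:ℝ)+1)) := by
          have := ihs
          push_cast at this ⊢
          exact this
        have h3 : Aval' s (n+1) / ((n:ℝ)+1) ≤ Tf s (Real.log ((n:ℝ)+1)) * (1/((n:ℝ)+1)) := by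
          rw [mul_one_div]
          apply div_le_div_of_nonneg_right h2 hnp1.le
        have hfinal : Tf (s+1) (Real.log n) + Tf s (Real.log ((n:ℝ)+1)) * (1/((n:ℝ)+1))
            ≤ Tf (s+1) (Real.log ((n:ℝ)+1)) := by
          calc Tf (s+1) (Real.log n) + Tf s (Real.log ((n:ℝ)+1)) * (1/((n:ℝ)+1))
              = Tf (s+1) (Real.log n) + (1/((n:ℝ)+1)) * Tf s (Real.log ((n:ℝ)+1)) := by ring
            _ ≤ Tf (s+1) (Real.log ((n:ℝ)+1)) := hkey
        push_cast
        linarith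


lemma Aval_eq_Aval' (s n : ℕ) : Aval s n = Aval' s n := by
  unfold Aval Aval'
  rw [sum_Icc_one]
  apply Finset.sum_congr rfl
  intro k _
  push_cast
  rw [show (-1:ℝ)^(k+1+1) = (-1:ℝ)^k from by rw [pow_succ, pow_succ]; ring]

end Proofs

/-- For all `m ≥ 2` and `n ≥ 1`,
`(ln n)^(m−1)/(m−1)! ≤ E[U^C(m,n)] ≤ Σ_(k=0)^(m−1) (ln n)^k/k!`. -/
theorem stmt12 (m n : ℕ) (hm : 2 ≤ m) (hn : 1 ≤ n) :
    (Real.log n) ^ (m - 1) / (Nat.factorial (m - 1) : ℝ) ≤ expUC m n ∧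
    expUC m n ≤ ∑ k ∈ Finset.range m, (Real.log n) ^ k / (Nat.factorial k : ℝ) := by
  have hm1 : 1 ≤ m := by omega
  have heq : expUC m n = Aval' (m-1) n :=
    (expUC_eq m n hm1 hn).trans (Aval_eq_Aval' (m-1) n)
  constructor
  · rw [heq]
    calc (Real.log n)^(m-1) / (Nat.factorial (m-1) : ℝ)
        ≤ Hsum n ^ (m-1) / (Nat.factorial (m-1) : ℝ) := by
          have hnum : (Real.log n)^(m-1) ≤ Hsum n ^ (m-1) := by
            apply pow_le_pow_left₀ (Real.log_nonneg (by exact_mod_cast hn))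
            exact log_le_Hsum n hn
          have hf : (0:ℝ) < (Nat.factorial (m-1) : ℝ) := by positivity
          apply div_le_div_of_nonneg_right hnum hf.le
      _ ≤ Aval' (m-1) n := lower_bound (m-1) n hn
  · rw [heq]
    have hub := upper_bound (m-1) n hn
    have hshape : Tf (m-1) (Real.log n)
        = ∑ k ∈ Finset.range m, (Real.log n)^k / (Nat.factorial k : ℝ) := by
      unfold Tf
      rw [show m - 1 + 1 = m from by omega]
    linarith [hshape ▸ hub]
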